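/- Let O be a finite order ideal in the terms of n variables, and fix an enumeration β_1,…,β_m of ∂O with nondecreasing degrees; for each i put M_{β_i} = {η a term : β_j does not divide η·β_i for every j > i}. Let η be a term and i an index with η ∈ M_{β_i}. Then ind_O(η·β_i) = deg(η) + 1, and for every δ ∈ O with η·δ ∉ O one has ind_O(η·δ) ≤ deg(η) < ind_O(η·β_i). -/

import Mathlib

open MvPolynomial

/-- A term in `n` variables, viewed as its exponent vector in `ℕ^n`. -/
abbrev Term (n : ℕ) := Fin n →₀ ℕ

/-- The total degree of a term. -/
def termDeg {n : ℕ} (τ : Term n) : ℕ := τ.sum fun _ e => e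

/-- `O` is an order ideal: every divisor (componentwise `≤`) of a term of `O` lies in `O`. -/
def IsOrderIdeal {n : ℕ} (O : Set (Term n)) : Prop :=
  ∀ σ τ : Term n, τ ∈ O → σ ≤ τ → σ ∈ O

/-- The border `∂O` of an order ideal `O`. -/
def border {n : ℕ} (O : Set (Term n)) : Set (Term n) :=
  {μ | μ ∉ O ∧ ∃ τ ∈ O, ∃ i : Fin n, μ = τ + Finsupp.single i 1}

/-- The Pommaret basis `P_O = {σ ∉ O : σ / min σ ∈ O}` of the monomial ideal generated by the
terms outside `O`; here `i` is the minimal variable of `σ`. -/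
def pommaret {n : ℕ} (O : Set (Term n)) : Set (Term n) :=
  {σ | σ ∉ O ∧ ∃ i : Fin n, σ i ≠ 0 ∧ (∀ j : Fin n, j < i → σ j = 0) ∧
    σ - Finsupp.single i 1 ∈ O}

/-- `F` is an `H`-marked set (with tails in `O`): for every `α ∈ H`,
`F α = α - Σ_{σ ∈ O} c_σ σ`, i.e. the coefficient of `α` is `1` and all other
terms in the support of `F α` lie in `O`. -/
def IsMarkedSet {n : ℕ} (A : Type*) [CommRing A] (O H : Set (Term n))
    (F : Term n → MvPolynomial (Fin n) A) : Prop :=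
  ∀ α ∈ H, (F α).coeff α = 1 ∧ ∀ γ ∈ (F α).support, γ ≠ α → γ ∈ O

/-- The `A`-submodule `⟨O⟩_A` of `R_A` spanned by the monomials with exponent in `O`. -/
noncomputable def OSpan {n : ℕ} (A : Type*) [CommRing A] (O : Set (Term n)) :
    Submodule A (MvPolynomial (Fin n) A) :=
  Submodule.span A ((fun σ : Term n => (monomial σ (1 : A) : MvPolynomial (Fin n) A)) '' O)

/-- `R_A = (S) ⊕ ⟨O⟩_A` as an internal direct sum of `A`-modules. -/
def IsBasisDecomp {n : ℕ} (A : Type*) [CommRing A] (O : Set (Term n))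
    (S : Set (MvPolynomial (Fin n) A)) : Prop :=
  (Submodule.restrictScalars A (Ideal.span S) ⊓ OSpan A O = ⊥) ∧
  (Submodule.restrictScalars A (Ideal.span S) ⊔ OSpan A O = ⊤)

/-- `F` is an `H`-marked basis. -/
def IsMarkedBasis {n : ℕ} (A : Type*) [CommRing A] (O H : Set (Term n))
    (F : Term n → MvPolynomial (Fin n) A) : Prop :=
  IsMarkedSet A O H F ∧ IsBasisDecomp A O (F '' H)

/-- The iterated borders: `∂^0 O = O` and `∂^{k+1} O = ∂(∂^0 O ∪ ⋯ ∪ ∂^k O)`. -/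
def borderIter {n : ℕ} (O : Set (Term n)) : ℕ → Set (Term n)
  | 0 => O
  | k + 1 => border (⋃ j : Fin (k + 1), borderIter O j.1)
decreasing_by exact j.2

/-- The index `ind_O(μ)`: the least `k` with `μ ∈ ∂^k O`. -/
noncomputable def indO {n : ℕ} (O : Set (Term n)) (μ : Term n) : ℕ :=
  sInf {k | μ ∈ borderIter O k}

/-- The multiplicative set of `β i` for the degree-ordered border reduction structure:
`M_{β_i} = {η : β_j ∤ η β_i for every j > i}`. -/
def multSet {n m : ℕ} (β : Fin m → Term n) (i : Fin m) : Set (Term n) :=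
  {η | ∀ j : Fin m, i < j → ¬ β j ≤ η + β i}

/-- The cone of `β i` by its multiplicative set. -/
def cone {n m : ℕ} (β : Fin m → Term n) (i : Fin m) : Set (Term n) :=
  {γ | ∃ η ∈ multSet β i, γ = η + β i}

/-- One step of border reduction: some `γ = η β_i ∈ supp g` with `η ∈ M_{β_i}` is replaced
using the marked polynomial `B i`. -/
def BStep {n m : ℕ} {A : Type*} [CommRing A] (β : Fin m → Term n)
    (B : Fin m → MvPolynomial (Fin n) A) (g h : MvPolynomial (Fin n) A) : Prop :=
  ∃ (i : Fin m) (η : Term n), η ∈ multSet β i ∧ η + β i ∈ g.support ∧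
    h = g - monomial η (g.coeff (η + β i)) * B i

/-- The S-polynomial of two marked polynomials with head terms `α`, `α'`. -/
noncomputable def Spoly {n : ℕ} {A : Type*} [CommRing A] (α α' : Term n)
    (f f' : MvPolynomial (Fin n) A) : MvPolynomial (Fin n) A :=
  monomial (α ⊔ α' - α) 1 * f - monomial (α ⊔ α' - α') 1 * f'

/-- `(α, α')` is a neighbour couple of distinct terms. -/
def Neighbour {n : ℕ} (α α' : Term n) : Prop :=
  α ≠ α' ∧ ((∃ j : Fin n, α = α' + Finsupp.single j 1) ∨
    (∃ i j : Fin n, α + Finsupp.single i 1 = α' + Finsupp.single j 1))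

/-- `(β i, β j)` is a non-multiplicative couple for the border reduction structure. -/
def NonMultB {n m : ℕ} (β : Fin m → Term n) (i j : Fin m) : Prop :=
  ∃ (ℓ : Fin n) (δ : Term n), Finsupp.single ℓ 1 ∉ multSet β i ∧ δ ∈ multSet β j ∧
    Finsupp.single ℓ 1 + β i = δ + β j

/-- The Pommaret multiplicative set of a term `α`: terms in the variables `x_1, …, min α`. -/
def pommMult {n : ℕ} (α : Term n) : Set (Term n) :=
  {η | ∀ j : Fin n, η j ≠ 0 → ∀ k : Fin n, k < j → α k = 0}

/-- One step of Pommaret reduction. -/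
def PStep {n : ℕ} {A : Type*} [CommRing A] (O : Set (Term n))
    (P : Term n → MvPolynomial (Fin n) A) (g h : MvPolynomial (Fin n) A) : Prop :=
  ∃ α ∈ pommaret O, ∃ η ∈ pommMult α, η + α ∈ g.support ∧
    h = g - monomial η (g.coeff (η + α)) * P α

/-- `(α, α')` is a non-multiplicative couple for the Pommaret reduction structure. -/
def NonMultP {n : ℕ} (α α' : Term n) : Prop :=
  ∃ ℓ : Fin n, Finsupp.single ℓ 1 ∉ pommMult α ∧
    ∃ δ ∈ pommMult α', Finsupp.single ℓ 1 + α = δ + α'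


section IndOAux
open Finsupp

lemma termDeg_add' {n : ℕ} (a b : Term n) : termDeg (a+b) = termDeg a + termDeg b := by
  simp [termDeg, Finsupp.sum_add_index']

lemma termDeg_single' {n : ℕ} (i : Fin n) : termDeg (Finsupp.single i (1:ℕ)) = 1 := by
  simp [termDeg, Finsupp.sum_single_index]

lemma termDeg_zero' {n : ℕ} {a : Term n} (h : termDeg a = 0) : a = 0 := by
  ext i
  by_contra hi
  have hmem : i ∈ a.support := Finsupp.mem_support_iff.mpr (by simpa using hi)
  have := Finset.sum_eq_zero_iff.mp h i hmem
  simp at this; exact hi (by simp [this])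

lemma exists_single_le' {n : ℕ} {a : Term n} (h : a ≠ 0) :
    ∃ i, Finsupp.single i (1:ℕ) ≤ a := by
  obtain ⟨i, hi⟩ := Finsupp.ne_iff.mp h
  exact ⟨i, Finsupp.single_le_iff.mpr (Nat.one_le_iff_ne_zero.mpr (by simpa using hi))⟩

lemma borderIter_zero' {n : ℕ} (O : Set (Term n)) : borderIter O 0 = O := by
  rw [borderIter]

lemma borderIter_succ' {n : ℕ} (O : Set (Term n)) (k : ℕ) :
    borderIter O (k+1) = border (⋃ j : Fin (k + 1), borderIter O j.1) := by
  rw [borderIter]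

lemma mem_cum' {n : ℕ} (O : Set (Term n)) (k : ℕ) (μ : Term n) :
    μ ∈ (⋃ j : Fin (k+1), borderIter O j.1) ↔ ∃ j ≤ k, μ ∈ borderIter O j := by
  simp only [Set.mem_iUnion]
  constructor
  · rintro ⟨j, hj⟩; exact ⟨j.1, Nat.lt_succ_iff.mp j.2, hj⟩
  · rintro ⟨j, hj, hm⟩; exact ⟨⟨j, Nat.lt_succ_iff.mpr hj⟩, hm⟩

lemma indO_upper' {n : ℕ} {O : Set (Term n)} :
    ∀ k μ, μ ∈ borderIter O (k+1) →
      μ ∉ O ∧ ∃ η b : Term n, b ∈ border O ∧ termDeg η ≤ k ∧ μ = η + b := by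
  intro k
  induction k using Nat.strong_induction_on with
  | _ k ih =>
    intro μ hμ
    rw [borderIter_succ'] at hμ
    obtain ⟨hnot, τ, hτ, i, rfl⟩ := hμ
    have hμO : τ + Finsupp.single i 1 ∉ O := by
      intro h
      exact hnot (Set.mem_iUnion.mpr ⟨⟨0, Nat.succ_pos k⟩, by rwa [borderIter_zero']⟩)
    obtain ⟨j, hj, hτj⟩ := (mem_cum' O k τ).mp hτ
    refine ⟨hμO, ?_⟩
    match j, hj, hτj with
    | 0, _, hτj =>
      rw [borderIter_zero'] at hτj
      exact ⟨0, τ + Finsupp.single i 1, ⟨hμO, τ, hτj, i, rfl⟩,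
        by simp [termDeg], by simp⟩
    | j'+1, hj, hτj =>
      obtain ⟨_, η, b, hb, hd, rfl⟩ := ih j' (by omega) τ hτj
      refine ⟨η + Finsupp.single i 1, b, hb, ?_, ?_⟩
      · rw [termDeg_add', termDeg_single']; omega
      · abel

lemma indO_lower' {n : ℕ} {O : Set (Term n)} :
    ∀ d (η b : Term n), b ∈ border O → termDeg η ≤ d →
      ∃ j ≤ d+1, η + b ∈ borderIter O j := by
  intro d
  induction d with
  | zero =>
    intro η b hb hd
    have h0 : η = 0 := termDeg_zero' (Nat.le_zero.mp hd)
    subst h0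
    refine ⟨1, le_refl _, ?_⟩
    rw [borderIter_succ']
    have he : (⋃ j : Fin 1, borderIter O j.1) = O := by
      apply Set.eq_of_subset_of_subset
      · rintro x hx
        obtain ⟨j, hj⟩ := Set.mem_iUnion.mp hx
        have hj0 : j.1 = 0 := by omega
        rw [hj0, borderIter_zero'] at hj
        exact hj
      · intro x hx
        exact Set.mem_iUnion.mpr ⟨⟨0, by omega⟩, by rwa [borderIter_zero']⟩
    rw [he]; simpa using hb
  | succ d ihd =>
    intro η b hb hd
    rcases Nat.lt_or_ge (termDeg η) (d+1) with h | h
    · obtain ⟨j, hj, hm⟩ := ihd η b hb (Nat.lt_succ_iff.mp h)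
      exact ⟨j, Nat.le_succ_of_le hj, hm⟩
    · have hη0 : η ≠ 0 := by
        intro h0; subst h0
        simp [termDeg] at h
      obtain ⟨i, hi⟩ := exists_single_le' hη0
      have hsum : (η - Finsupp.single i 1) + Finsupp.single i 1 = η :=
        tsub_add_cancel_of_le hi
      have hd' : termDeg (η - Finsupp.single i 1) ≤ d := by
        have h1 := termDeg_add' (η - Finsupp.single i 1) (Finsupp.single i 1)
        rw [hsum, termDeg_single'] at h1
        omega
      obtain ⟨j, hj, hm⟩ := ihd _ b hb hd'
      by_cases hc : η + b ∈ (⋃ j : Fin (d+2), borderIter O j.1)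
      · obtain ⟨j', hj', hm'⟩ := (mem_cum' O (d+1) _).mp hc
        exact ⟨j', Nat.le_succ_of_le hj', hm'⟩
      · refine ⟨d+2, le_refl _, ?_⟩
        rw [borderIter_succ']
        refine ⟨hc, (η - Finsupp.single i 1) + b, ?_, i, ?_⟩
        · exact (mem_cum' O (d+1) _).mpr ⟨j, hj, hm⟩
        · conv_lhs => rw [← hsum]
          exact add_right_comm _ _ _

lemma indO_between' {n : ℕ} {O : Set (Term n)} (hO : IsOrderIdeal O) :
    ∀ k (δ μ : Term n), termDeg μ ≤ termDeg δ + k → δ ∈ O → δ ≤ μ → μ ∉ O →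
      ∃ b ∈ border O, b ≤ μ ∧ termDeg δ + 1 ≤ termDeg b := by
  intro k
  induction k with
  | zero =>
    intro δ μ hk hδ hle hμ
    exfalso
    obtain ⟨c, rfl⟩ := le_iff_exists_add.mp hle
    rw [termDeg_add'] at hk
    have hc : c = 0 := termDeg_zero' (by omega)
    subst hc
    simp only [add_zero] at hμ
    exact hμ hδ
  | succ k ihk =>
    intro δ μ hk hδ hle hμ
    have hne : δ ≠ μ := fun h => hμ (h ▸ hδ)
    obtain ⟨i, hi⟩ := Finsupp.ne_iff.mp hne
    have hi' : δ i < μ i := lt_of_le_of_ne (Finsupp.le_def.mp hle i) hi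
    have hle' : δ + Finsupp.single i 1 ≤ μ := by
      rw [Finsupp.le_def]
      intro j
      rcases eq_or_ne j i with rfl | hji
      · simp; omega
      · simp [Finsupp.single_apply, Ne.symm hji]
        exact Finsupp.le_def.mp hle j
    by_cases hO' : δ + Finsupp.single i 1 ∈ O
    · have hdk : termDeg μ ≤ termDeg (δ + Finsupp.single i 1) + k := by
        rw [termDeg_add', termDeg_single']; omega
      obtain ⟨b, hb, hbμ, hdb⟩ := ihk _ μ hdk hO' hle' hμ
      refine ⟨b, hb, hbμ, ?_⟩
      rw [termDeg_add', termDeg_single'] at hdb; omega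
    · exact ⟨δ + Finsupp.single i 1, ⟨hO', δ, hδ, i, rfl⟩, hle',
        by rw [termDeg_add', termDeg_single']⟩

end IndOAux


/-- if `η ∈ M_(β_i)` for the degree-ordered border reduction structure,
then `ind_O(η β_i) = deg η + 1`, and for every `δ ∈ O` with `η δ ∉ O` one has
`ind_O(η δ) ≤ deg η < ind_O(η β_i)`. -/
theorem indO_cone_and_tail {n : ℕ}
    (O : Set (Term n)) (hO : IsOrderIdeal O) (hOfin : O.Finite)
    {m : ℕ} (β : Fin m → Term n) (hβinj : Function.Injective β)
    (hβrange : Set.range β = border O)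
    (hβdeg : Monotone fun i => termDeg (β i))
    (η : Term n) (i : Fin m) (hη : η ∈ multSet β i) :
    indO O (η + β i) = termDeg η + 1 ∧
      ∀ δ ∈ O, η + δ ∉ O →
        indO O (η + δ) ≤ termDeg η ∧ termDeg η < indO O (η + β i) := by
  have hβi : β i ∈ border O := hβrange ▸ Set.mem_range_self i
  have hβiO : β i ∉ O := hβi.1
  have hμO : η + β i ∉ O := fun h => hβiO (hO _ _ h le_add_self)
  have hno : ∀ k, η + β i ∈ borderIter O k → termDeg η + 1 ≤ k := by
    intro k hk
    by_contra hlt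
    push_neg at hlt
    match k, hk, hlt with
    | 0, hk, _ => exact hμO (by rwa [borderIter_zero'] at hk)
    | k'+1, hk, hlt =>
      obtain ⟨_, η', b, hb, hdη', heq⟩ := indO_upper' k' _ hk
      rw [← hβrange] at hb
      obtain ⟨j, rfl⟩ := hb
      have hdeq : termDeg η + termDeg (β i) = termDeg η' + termDeg (β j) := by
        rw [← termDeg_add', ← termDeg_add', ← heq]
      have hij : termDeg (β i) < termDeg (β j) := by omega
      have hlt' : i < j := by
        by_contra hc
        push_neg at hc
        exact absurd (hβdeg hc) (not_le.mpr hij)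
      exact hη j hlt' (heq ▸ le_add_self)
  obtain ⟨j0, hj0le, hj0⟩ := indO_lower' (termDeg η) η (β i) hβi le_rfl
  have hS : j0 = termDeg η + 1 := le_antisymm hj0le (hno j0 hj0)
  have hind : indO O (η + β i) = termDeg η + 1 := by
    refine le_antisymm (Nat.sInf_le (hS ▸ hj0)) ?_
    exact le_csInf ⟨j0, hj0⟩ (fun b hb => hno b hb)
  refine ⟨hind, ?_⟩
  intro δ hδ hηδ
  have hη0 : η ≠ 0 := by
    rintro rfl
    rw [zero_add] at hηδ
    exact hηδ hδ
  have hdη : 1 ≤ termDeg η :=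
    Nat.one_le_iff_ne_zero.mpr (fun h => hη0 (termDeg_zero' h))
  obtain ⟨b, hb, hbμ, hdb⟩ := indO_between' hO (termDeg η) δ (η + δ)
    (by rw [termDeg_add']; omega) hδ le_add_self hηδ
  have hsum : ((η + δ) - b) + b = η + δ := tsub_add_cancel_of_le hbμ
  have hd' : termDeg ((η + δ) - b) ≤ termDeg η - 1 := by
    have h1 := termDeg_add' ((η + δ) - b) b
    rw [hsum, termDeg_add'] at h1
    omega
  obtain ⟨j, hjle, hjm⟩ := indO_lower' (termDeg η - 1) _ b hb hd'
  rw [hsum] at hjm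
  constructor
  · exact le_trans (Nat.sInf_le hjm) (by omega)
  · rw [hind]; omega
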